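/- Let n ≥ 2 and N ≥ 1 be integers, A = (a_{ij})_{1≤i,j≤n-1} ∈ M_{n-1}(ℂ), and η_{(1)}, η_{(2)} ∈ (ℂ∖{0})^n with D_i = diag(η_{0i},…,η_{n-1,i}) for i = 1,2. Suppose there exists a complex number ζ with ζ^N = 1 such that A₀* D₁ A₀ = ζ D₂, where A₀* is the conjugate transpose of A₀. Then for all m, m' ∈ X(n,N), ∑_{x∈X(n,N)} binom(N,x) (∏_{i=0}^{n-1} η_{i1}^{x_i}) φ_A(x;m) conj(φ_A(x;m')) = δ_{m,m'} (∏_{i=0}^{n-1} η_{i2}^{m_i}) / binom(N,m). -/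

import Mathlib

open Finset MvPolynomial

/-- `X(n,N)`: the set of tuples in `ℕ₀ⁿ` with coordinate sum `N`,
as a `Finset` of functions `Fin n → ℕ`. -/
def XSet (n N : ℕ) : Finset (Fin n → ℕ) :=
  (Fintype.piFinset fun _ : Fin n => Finset.range (N + 1)).filter fun x => ∑ i, x i = N

/-- The multivariate Krawtchouk polynomial `φ_A(x;m)` associated to the bordered
matrix `A₀` (whose row `0` and column `0` consist of ones): it is the coefficient of
`t^m` in the generating function `∏ᵢ (∑ⱼ (A₀)ᵢⱼ tⱼ)^{xᵢ}`, divided by the multinomial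
coefficient `binom(N, m) = (∑ mᵢ)! / ∏ mᵢ!`. -/
noncomputable def phi {n : ℕ} (A0 : Matrix (Fin n) (Fin n) ℂ) (x m : Fin n → ℕ) : ℂ :=
  MvPolynomial.coeff (Finsupp.equivFunOnFinite.symm m)
      (∏ i, (∑ j, MvPolynomial.C (A0 i j) * MvPolynomial.X j) ^ x i)
    / (Nat.multinomial Finset.univ m : ℂ)

section Aux

variable {n N : ℕ}

lemma XSet_eq_piAntidiag (n N : ℕ) : XSet n N = Finset.piAntidiag Finset.univ N := by
  ext x
  simp only [XSet, Finset.mem_filter, Fintype.mem_piFinset, Finset.mem_range,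
    Finset.mem_piAntidiag, Nat.lt_succ_iff]
  constructor
  · rintro ⟨-, h⟩; exact ⟨h, fun i _ => Finset.mem_univ i⟩
  · rintro ⟨h, -⟩
    exact ⟨fun i => h ▸ Finset.single_le_sum (fun j _ => Nat.zero_le _) (Finset.mem_univ i), h⟩

lemma multinomial_expansion {S : Type*} [CommSemiring S] (N : ℕ) (f : Fin n → S) :
    (∑ i, f i) ^ N
      = ∑ x ∈ XSet n N, (Nat.multinomial Finset.univ x : S) * ∏ i, f i ^ x i := by
  rw [XSet_eq_piAntidiag, Finset.sum_pow_eq_sum_piAntidiag]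

lemma prod_X_pow {S : Type*} [CommSemiring S] (x : Fin n → ℕ) :
    (∏ i, (MvPolynomial.X i : MvPolynomial (Fin n) S) ^ x i)
      = MvPolynomial.monomial (Finsupp.equivFunOnFinite.symm x) 1 := by
  rw [MvPolynomial.monomial_eq, map_one, one_mul]
  rw [Finsupp.prod_fintype]
  · rfl
  · intro i; exact pow_zero _

noncomputable abbrev Rg (n : ℕ) := MvPolynomial (Fin n) ℂ

noncomputable def Fpoly (A0 : Matrix (Fin n) (Fin n) ℂ) (η1 : Fin n → ℂ) (i : Fin n) :
    MvPolynomial (Fin n) (Rg n) :=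
  C (C (η1 i) * ∑ k, C ((starRingEnd ℂ) (A0 i k)) * X k) * ∑ j, C (C (A0 i j)) * X j

lemma hsum_lemma (A0 : Matrix (Fin n) (Fin n) ℂ) (η1 η2 : Fin n → ℂ) (ζ : ℂ)
    (hA : A0.conjTranspose * Matrix.diagonal η1 * A0 = ζ • Matrix.diagonal η2) :
    ∑ i, Fpoly A0 η1 i = ∑ j, C (C (ζ * η2 j) * X j) * X j := by
  have hA' : ∀ k j : Fin n, (∑ i, (starRingEnd ℂ) (A0 i k) * (η1 i * A0 i j))
      = ζ * (if k = j then η2 k else 0) := by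
    intro k j
    have h := congrFun (congrFun hA k) j
    rw [Matrix.mul_assoc] at h
    simpa [Matrix.mul_apply, Matrix.conjTranspose_apply, Matrix.diagonal_mul,
      Matrix.smul_apply, Matrix.diagonal_apply, smul_eq_mul] using h
  have h1 : ∀ i, Fpoly A0 η1 i = ∑ j,
      C ((C (η1 i) * ∑ k, C ((starRingEnd ℂ) (A0 i k)) * X k) * C (A0 i j)) * X j := by
    intro i
    rw [Fpoly, Finset.mul_sum]
    refine Finset.sum_congr rfl fun j _ => ?_
    simp only [map_mul]; ring
  rw [Finset.sum_congr rfl fun i _ => h1 i, Finset.sum_comm]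
  refine Finset.sum_congr rfl fun j _ => ?_
  rw [← Finset.sum_mul, ← map_sum]
  have h2 : ∀ i : Fin n, (C (η1 i) * ∑ k, C ((starRingEnd ℂ) (A0 i k)) * X k) * C (A0 i j)
      = ∑ k, C ((starRingEnd ℂ) (A0 i k) * (η1 i * A0 i j)) * X k := by
    intro i
    rw [Finset.mul_sum, Finset.sum_mul]
    refine Finset.sum_congr rfl fun k _ => ?_
    simp only [map_mul]; ring
  rw [Finset.sum_congr rfl fun i _ => h2 i, Finset.sum_comm]
  have h3 : ∀ k : Fin n, (∑ i, C ((starRingEnd ℂ) (A0 i k) * (η1 i * A0 i j)) * X k)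
      = if k = j then C (ζ * η2 j) * X j else 0 := by
    intro k
    rw [← Finset.sum_mul, ← map_sum, hA' k j]
    split_ifs with h
    · subst h; rfl
    · simp
  rw [Finset.sum_congr rfl fun k _ => h3 k, Finset.sum_ite_eq' Finset.univ j,
    if_pos (Finset.mem_univ j)]

lemma coeff_RHS (A0 : Matrix (Fin n) (Fin n) ℂ) (η1 η2 : Fin n → ℂ) (ζ : ℂ)
    (hζ : ζ ^ N = 1)
    (hA : A0.conjTranspose * Matrix.diagonal η1 * A0 = ζ • Matrix.diagonal η2)
    (m m' : Fin n → ℕ) (hm : m ∈ XSet n N) (hmN : ∑ i, m i = N) :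
    MvPolynomial.coeff (Finsupp.equivFunOnFinite.symm m')
        (MvPolynomial.coeff (Finsupp.equivFunOnFinite.symm m)
          ((∑ i, Fpoly A0 η1 i) ^ N))
      = if m = m' then (Nat.multinomial Finset.univ m : ℂ) * ∏ i, η2 i ^ m i else 0 := by
  have e_inj : ∀ a b : Fin n → ℕ,
      (Finsupp.equivFunOnFinite.symm a = Finsupp.equivFunOnFinite.symm b) ↔ a = b :=
    fun a b => Equiv.apply_eq_iff_eq _
  rw [hsum_lemma A0 η1 η2 ζ hA, multinomial_expansion, MvPolynomial.coeff_sum]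
  have hterm : ∀ x : Fin n → ℕ,
      MvPolynomial.coeff (Finsupp.equivFunOnFinite.symm m)
        ((Nat.multinomial Finset.univ x : MvPolynomial (Fin n) (Rg n)) *
          ∏ j, (C (C (ζ * η2 j) * X j) * X j) ^ x j)
      = if x = m then
          (Nat.multinomial Finset.univ x : Rg n) * ∏ j, (C (ζ * η2 j) * X j) ^ x j
        else 0 := by
    intro x
    rw [← map_natCast (C : Rg n →+* MvPolynomial (Fin n) (Rg n))]
    simp only [mul_pow, Finset.prod_mul_distrib, ← map_pow, ← map_prod, _root_.prod_X_pow]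
    rw [C_mul_monomial, C_mul_monomial, MvPolynomial.coeff_monomial]
    simp only [e_inj, mul_one]
  rw [Finset.sum_congr rfl fun x _ => hterm x, Finset.sum_ite_eq' (XSet n N) m, if_pos hm]
  rw [← map_natCast (C : ℂ →+* Rg n)]
  simp only [mul_pow, Finset.prod_mul_distrib, ← map_pow, ← map_prod, _root_.prod_X_pow]
  rw [C_mul_monomial, C_mul_monomial, MvPolynomial.coeff_monomial]
  simp only [e_inj, mul_one]
  split_ifs with h
  · congr 1
    simp only [mul_pow, Finset.prod_mul_distrib, Finset.prod_pow_eq_pow_sum, hmN, hζ, one_mul]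
  · rfl

lemma coeff_F_prod (A0 : Matrix (Fin n) (Fin n) ℂ) (η1 : Fin n → ℂ) (x m m' : Fin n → ℕ) :
    MvPolynomial.coeff (Finsupp.equivFunOnFinite.symm m')
        (MvPolynomial.coeff (Finsupp.equivFunOnFinite.symm m) (∏ i, Fpoly A0 η1 i ^ x i))
      = (∏ i, η1 i ^ x i) *
          MvPolynomial.coeff (Finsupp.equivFunOnFinite.symm m)
            (∏ i, (∑ j, C (A0 i j) * X j) ^ x i) *
          (starRingEnd ℂ) (MvPolynomial.coeff (Finsupp.equivFunOnFinite.symm m')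
            (∏ i, (∑ j, C (A0 i j) * X j) ^ x i)) := by
  have h1 : ∏ i, Fpoly A0 η1 i ^ x i
      = C ((C (∏ i, η1 i ^ x i)) *
            MvPolynomial.map (starRingEnd ℂ) (∏ i, (∑ j, C (A0 i j) * X j) ^ x i)) *
          MvPolynomial.map (C : ℂ →+* Rg n) (∏ i, (∑ j, C (A0 i j) * X j) ^ x i) := by
    simp only [Fpoly, mul_pow, Finset.prod_mul_distrib, ← map_pow, ← map_prod]
    refine congrArg₂ (· * ·) ?_ ?_
    · refine congrArg C (congrArg₂ (· * ·) rfl ?_)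
      simp only [map_prod, map_pow, map_sum, map_mul, MvPolynomial.map_C, MvPolynomial.map_X]
    · simp only [map_prod, map_pow, map_sum, map_mul, MvPolynomial.map_C, MvPolynomial.map_X]
  rw [h1, coeff_C_mul, MvPolynomial.coeff_map, mul_comm, coeff_C_mul, coeff_C_mul,
    MvPolynomial.coeff_map]
  ac_rfl

lemma key_sum (A0 : Matrix (Fin n) (Fin n) ℂ) (η1 η2 : Fin n → ℂ) (ζ : ℂ)
    (hζ : ζ ^ N = 1)
    (hA : A0.conjTranspose * Matrix.diagonal η1 * A0 = ζ • Matrix.diagonal η2)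
    (m m' : Fin n → ℕ) (hm : m ∈ XSet n N) (hmN : ∑ i, m i = N) :
    ∑ x ∈ XSet n N,
        (Nat.multinomial Finset.univ x : ℂ) * (∏ i, η1 i ^ x i) *
          MvPolynomial.coeff (Finsupp.equivFunOnFinite.symm m)
            (∏ i, (∑ j, C (A0 i j) * X j) ^ x i) *
          (starRingEnd ℂ) (MvPolynomial.coeff (Finsupp.equivFunOnFinite.symm m')
            (∏ i, (∑ j, C (A0 i j) * X j) ^ x i))
      = if m = m' then (Nat.multinomial Finset.univ m : ℂ) * ∏ i, η2 i ^ m i else 0 := by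
  rw [← coeff_RHS A0 η1 η2 ζ hζ hA m m' hm hmN, multinomial_expansion,
    MvPolynomial.coeff_sum, MvPolynomial.coeff_sum]
  refine Finset.sum_congr rfl fun x _ => ?_
  rw [← map_natCast (C : Rg n →+* MvPolynomial (Fin n) (Rg n)), coeff_C_mul,
    ← map_natCast (C : ℂ →+* Rg n), coeff_C_mul, coeff_F_prod]
  ring

end Aux

/-- Sufficiency: if `A₀* D₁ A₀ = ζ D₂` for some `N`-th root of unity `ζ`, then the
multivariate Krawtchouk polynomials satisfy the orthogonality relation. -/
theorem krawtchouk_orthogonality_of_matrix_relation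
    (n N : ℕ) (hn : 2 ≤ n) (hN : 1 ≤ N)
    (A0 : Matrix (Fin n) (Fin n) ℂ)
    (hrow : ∀ j, A0 ⟨0, by omega⟩ j = 1) (hcol : ∀ i, A0 i ⟨0, by omega⟩ = 1)
    (η1 η2 : Fin n → ℂ) (hη1 : ∀ i, η1 i ≠ 0) (hη2 : ∀ i, η2 i ≠ 0)
    (ζ : ℂ) (hζ : ζ ^ N = 1)
    (hA : A0.conjTranspose * Matrix.diagonal η1 * A0 = ζ • Matrix.diagonal η2) :
    ∀ m ∈ XSet n N, ∀ m' ∈ XSet n N,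
      ∑ x ∈ XSet n N,
          (Nat.multinomial Finset.univ x : ℂ) * (∏ i, η1 i ^ x i) *
            phi A0 x m * (starRingEnd ℂ) (phi A0 x m')
        = if m = m' then (∏ i, η2 i ^ m i) / (Nat.multinomial Finset.univ m : ℂ)
          else 0 := by
  intro m hm m' hm'
  have hmN : ∑ i, m i = N := (Finset.mem_filter.mp hm).2
  have hMm : (Nat.multinomial Finset.univ m : ℂ) ≠ 0 :=
    Nat.cast_ne_zero.mpr (Nat.multinomial_pos _ _).ne'
  have hMm' : (Nat.multinomial Finset.univ m' : ℂ) ≠ 0 :=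
    Nat.cast_ne_zero.mpr (Nat.multinomial_pos _ _).ne'
  calc
    ∑ x ∈ XSet n N,
        (Nat.multinomial Finset.univ x : ℂ) * (∏ i, η1 i ^ x i) *
          phi A0 x m * (starRingEnd ℂ) (phi A0 x m')
      = (∑ x ∈ XSet n N,
          (Nat.multinomial Finset.univ x : ℂ) * (∏ i, η1 i ^ x i) *
            MvPolynomial.coeff (Finsupp.equivFunOnFinite.symm m)
              (∏ i, (∑ j, C (A0 i j) * X j) ^ x i) *
            (starRingEnd ℂ) (MvPolynomial.coeff (Finsupp.equivFunOnFinite.symm m')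
              (∏ i, (∑ j, C (A0 i j) * X j) ^ x i))) /
          ((Nat.multinomial Finset.univ m : ℂ) * (Nat.multinomial Finset.univ m' : ℂ)) := by
        rw [Finset.sum_div]
        refine Finset.sum_congr rfl fun x _ => ?_
        simp only [phi, map_div₀, map_natCast, map_mul, map_inv₀, div_eq_mul_inv, mul_inv]
        ring
    _ = (if m = m' then (Nat.multinomial Finset.univ m : ℂ) * ∏ i, η2 i ^ m i else 0) /
          ((Nat.multinomial Finset.univ m : ℂ) * (Nat.multinomial Finset.univ m' : ℂ)) := by
        rw [key_sum A0 η1 η2 ζ hζ hA m m' hm hmN]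
    _ = if m = m' then (∏ i, η2 i ^ m i) / (Nat.multinomial Finset.univ m : ℂ) else 0 := by
        split_ifs with h
        · subst h
          rw [mul_div_mul_left _ _ hMm]
        · exact zero_div _
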